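/- arXiv:2005.04217 — 5 statements merged into one kernel-verified Lean document; each statement's English description precedes it below -/
import Mathlib

section
/- For every natural number n and every integer x, the operator X acts on the basis functions φ_n by (X φ_n(·;α))(x) = −n · φ_{n+1}(x;α) + (n − α) · φ_n(x;α). -/
/-- Pochhammer symbol `(a)_k = a (a+1) ⋯ (a+k-1)`, with `(a)_0 = 1`. -/
noncomputable def poch (a : ℝ) (k : ℕ) : ℝ := ∏ i ∈ Finset.range k, (a + (i : ℝ))

/-- Basis functions `φ_n(x;α) = (-x)_n / (α-x)_n`. -/
noncomputable def phi (α : ℝ) (n : ℕ) (x : ℤ) : ℝ :=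
  poch (-(x : ℝ)) n / poch (α - (x : ℝ)) n

/-- The difference operator `X`: `(X f)(x) = (x-α) f(x) - x f(x-1)`. -/
noncomputable def Xop (α : ℝ) (f : ℤ → ℝ) (x : ℤ) : ℝ :=
  ((x : ℝ) - α) * f x - (x : ℝ) * f (x - 1)

lemma poch_succ (a : ℝ) (k : ℕ) : poch a (k + 1) = poch a k * (a + k) :=
  Finset.prod_range_succ _ _

lemma poch_shift (a : ℝ) (n : ℕ) : poch a (n + 1) = a * poch (a + 1) n := by
  unfold poch
  rw [Finset.prod_range_succ']
  simp only [Nat.cast_zero, add_zero, Nat.cast_add, Nat.cast_one]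
  rw [mul_comm]
  congr 1
  apply Finset.prod_congr rfl
  intro i _
  push_cast
  ring

lemma poch_ne (α : ℝ) (hα : ∀ m : ℤ, α ≠ (m : ℝ)) (x : ℤ) (n : ℕ) :
    poch (α - (x : ℝ)) n ≠ 0 := by
  unfold poch
  apply Finset.prod_ne_zero_iff.mpr
  intro i _ h0
  apply hα (x - i)
  push_cast
  linarith

theorem statement0 (N : ℕ) (hN : 0 < N) (α : ℝ) (hα : ∀ m : ℤ, α ≠ (m : ℝ))
    (n : ℕ) (x : ℤ) :
    Xop α (phi α n) x = -(n : ℝ) * phi α (n + 1) x + ((n : ℝ) - α) * phi α n x := by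
  have hQ : poch (α - (x : ℝ)) n ≠ 0 := poch_ne α hα x n
  have hA : α - (x : ℝ) ≠ 0 := by
    intro h; exact hα x (by linarith)
  have hAn : α - (x : ℝ) + (n : ℝ) ≠ 0 := by
    intro h
    apply hα (x - (n : ℤ))
    push_cast
    linarith
  have hden : poch (α - ((x - 1 : ℤ) : ℝ)) n
      = poch (α - (x : ℝ)) n * (α - (x : ℝ) + (n : ℝ)) / (α - (x : ℝ)) := by
    rw [eq_div_iff hA]
    have h1 : poch (α - ((x - 1 : ℤ) : ℝ)) n = poch ((α - (x : ℝ)) + 1) n := by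
      congr 1; push_cast; ring
    rw [h1]
    linear_combination poch_succ (α - (x : ℝ)) n - poch_shift (α - (x : ℝ)) n
  have hnum : (x : ℝ) * poch (1 - (x : ℝ)) n
      = -(poch (-(x : ℝ)) n * (-(x : ℝ) + (n : ℝ))) := by
    have h1 : poch (1 - (x : ℝ)) n = poch (-(x : ℝ) + 1) n := by
      congr 1; ring
    rw [h1]
    linear_combination poch_shift (-(x : ℝ)) n - poch_succ (-(x : ℝ)) n
  simp only [Xop, phi]
  rw [poch_succ (-(x : ℝ)) n, poch_succ (α - (x : ℝ)) n, hden]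
  field_simp
  have e : poch (-((x - 1 : ℤ) : ℝ)) n = poch (1 - (x : ℝ)) n := by
    congr 1; push_cast; ring
  linear_combination
    ((x : ℝ) - α) * hnum + ((x : ℝ) - α) * (x : ℝ) * e
end

section
/- The operators X and Z satisfy the commutation relation [Z, X] = Z² + Z: for every function f : ℤ → ℝ and every integer x, (Z(X f))(x) − (X(Z f))(x) = (Z(Z f))(x) + (Z f)(x). -/
/-- The difference operator `Z`: `(Z f)(x) = -f(x) + (x/(x-α)) f(x-1)`. -/
noncomputable def Zop (α : ℝ) (f : ℤ → ℝ) (x : ℤ) : ℝ :=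
  -f x + ((x : ℝ) / ((x : ℝ) - α)) * f (x - 1)

theorem statement14 (α : ℝ) (hα : ∀ m : ℤ, α ≠ (m : ℝ)) (f : ℤ → ℝ) (x : ℤ) :
    Zop α (Xop α f) x - Xop α (Zop α f) x = Zop α (Zop α f) x + Zop α f x := by
  have h1 : ((x : ℝ)) - α ≠ 0 := sub_ne_zero.mpr (fun h => hα x h.symm)
  have h2 : (((x - 1 : ℤ) : ℝ)) - α ≠ 0 := sub_ne_zero.mpr (fun h => hα (x-1) h.symm)
  simp only [Zop, Xop]
  push_cast at h2 ⊢
  have hxx : x - 1 - 1 = x - 2 := by ring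
  rw [hxx]
  field_simp
  ring
end

section
/- The operators X, Y, Z satisfy the quadratic relation [X, Y] = ξ₁(X² + Z²) + {X, Z} + {Y, Z} + ξ₂ X + ξ₃ Z + Y + ξ₀ I: for every function f : ℤ → ℝ and every integer x, (X(Y f))(x) − (Y(X f))(x) = ξ₁((X(X f))(x) + (Z(Z f))(x)) + (X(Z f))(x) + (Z(X f))(x) + (Y(Z f))(x) + (Z(Y f))(x) + ξ₂ (X f)(x) + ξ₃ (Z f)(x) + (Y f)(x) + ξ₀ f(x), where ξ₀ = α(α − β), ξ₁ = N − β, ξ₂ = 1 + α(1 + N − β), ξ₃ = α + (α+1)(N − β). -/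
/-- Coefficients of the difference operator `Y`. -/
noncomputable def A1 (α β : ℝ) (N : ℕ) (x : ℝ) : ℝ := (x - α) * (x - (N : ℝ)) * (x + 1 - α)
noncomputable def A2 (α β : ℝ) (N : ℕ) (x : ℝ) : ℝ := x * (x - α) * (x + β - α - (N : ℝ))
noncomputable def A0 (α β : ℝ) (N : ℕ) (x : ℝ) : ℝ :=
  (x - α) * (-2 * x ^ 2 + (2 * α - 1 + 2 * (N : ℝ) - β) * x - (N : ℝ) * (α - 1))

/-- The difference operator `Y`: `(Y f)(x) = A₁(x) f(x+1) + A₂(x) f(x-1) + A₀(x) f(x)`. -/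
noncomputable def Yop (α β : ℝ) (N : ℕ) (f : ℤ → ℝ) (x : ℤ) : ℝ :=
  A1 α β N (x : ℝ) * f (x + 1) + A2 α β N (x : ℝ) * f (x - 1) + A0 α β N (x : ℝ) * f x

theorem statement15 (N : ℕ) (hN : 0 < N) (α β : ℝ) (hα : ∀ m : ℤ, α ≠ (m : ℝ))
    (f : ℤ → ℝ) (x : ℤ) :
    Xop α (Yop α β N f) x - Yop α β N (Xop α f) x =
      ((N : ℝ) - β) * (Xop α (Xop α f) x + Zop α (Zop α f) x)
        + (Xop α (Zop α f) x + Zop α (Xop α f) x)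
        + (Yop α β N (Zop α f) x + Zop α (Yop α β N f) x)
        + (1 + α * (1 + (N : ℝ) - β)) * Xop α f x
        + (α + (α + 1) * ((N : ℝ) - β)) * Zop α f x
        + Yop α β N f x
        + α * (α - β) * f x := by

  have h0 : (x : ℝ) - α ≠ 0 := sub_ne_zero.mpr (fun h => hα x h.symm)
  have h1 : ((x - 1 : ℤ) : ℝ) - α ≠ 0 := sub_ne_zero.mpr (fun h => hα (x-1) h.symm)
  have h2 : ((x + 1 : ℤ) : ℝ) - α ≠ 0 := sub_ne_zero.mpr (fun h => hα (x+1) h.symm)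
  simp only [Xop, Yop, Zop, A0, A1, A2]
  push_cast at *
  have e1 : (x : ℝ) - 1 + 1 = x := by ring
  have e2 : (x : ℝ) + 1 - 1 = x := by ring
  rw [show (x:ℤ) - 1 + 1 = x by ring, show (x:ℤ) + 1 - 1 = x by ring]
  field_simp
  ring
end

section
/- The operators X, Y, Z satisfy the quadratic relation [Y, Z] = 3X² + Z² + ξ₁{X, Z} + ξ₄ X + ξ₂ Z + ξ₀ I: for every function f : ℤ → ℝ and every integer x, (Y(Z f))(x) − (Z(Y f))(x) = 3(X(X f))(x) + (Z(Z f))(x) + ξ₁((X(Z f))(x) + (Z(X f))(x)) + ξ₄ (X f)(x) + ξ₂ (Z f)(x) + ξ₀ f(x), where ξ₀ = α(α − β), ξ₁ = N − β, ξ₂ = 1 + α(1 + N − β), ξ₄ = 4α − 2β − 1. -/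
theorem statement16 (N : ℕ) (hN : 0 < N) (α β : ℝ) (hα : ∀ m : ℤ, α ≠ (m : ℝ))
    (f : ℤ → ℝ) (x : ℤ) :
    Yop α β N (Zop α f) x - Zop α (Yop α β N f) x =
      3 * Xop α (Xop α f) x + Zop α (Zop α f) x
        + ((N : ℝ) - β) * (Xop α (Zop α f) x + Zop α (Xop α f) x)
        + (4 * α - 2 * β - 1) * Xop α f x
        + (1 + α * (1 + (N : ℝ) - β)) * Zop α f x
        + α * (α - β) * f x := by

  have h0 : (x : ℝ) - α ≠ 0 := sub_ne_zero.mpr fun h => hα x h.symm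
  have h1 : ((x + 1 : ℤ) : ℝ) - α ≠ 0 := sub_ne_zero.mpr fun h => hα (x+1) h.symm
  have h2 : ((x - 1 : ℤ) : ℝ) - α ≠ 0 := sub_ne_zero.mpr fun h => hα (x-1) h.symm
  simp only [Yop, Zop, Xop, A0, A1, A2] at *
  push_cast at *
  have e1 : (x : ℝ) + 1 - 1 = (x : ℝ) := by ring
  have e2 : ((x : ℤ) + 1 - 1) = x := by ring
  have e3 : ((x : ℤ) - 1 - 1) = x - 2 := by ring
  rw [e2, e3]
  field_simp
  ring
end

section
/- Centrality of the Casimir element of the quadratic algebra R_H: let A be an associative unital ℝ-algebra, let ξ₀, ξ₁, ξ₂, ξ₃, ξ₄ ∈ ℝ, and let X, Y, Z ∈ A satisfy ZX − XZ = Z² + Z, XY − YX = ξ₁(X² + Z²) + {X, Z} + {Y, Z} + ξ₂ X + ξ₃ Z + Y + ξ₀·1, and YZ − ZY = 3X² + Z² + ξ₁{X, Z} + ξ₄ X + ξ₂ Z + ξ₀·1, where {A, B} = AB + BA. Define Q = X³ + ξ₁ Z³ + (ξ₁/2){X², Z} + 2{X, Z²} + (1/2){Y, Z²} + (ξ₄/2)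 X² + ((ξ₁ + ξ₃ + ξ₄)/2) Z² + ((ξ₂ + 3)/2){X, Z} + (1/2){Y, Z} + (ξ₀ + 1/2) X + (ξ₀ + ξ₄/2) Z. Then Q commutes with X, Y and Z: QX = XQ, QY = YQ and QZ = ZQ. -/
set_option maxHeartbeats 4000000


theorem statement17 (A : Type*) [Ring A] [Algebra ℝ A]
    (ξ₀ ξ₁ ξ₂ ξ₃ ξ₄ : ℝ) (X Y Z : A)
    (h1 : Z * X - X * Z = Z ^ 2 + Z)
    (h2 : X * Y - Y * X =
      ξ₁ • (X ^ 2 + Z ^ 2) + (X * Z + Z * X) + (Y * Z + Z * Y)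
        + ξ₂ • X + ξ₃ • Z + Y + ξ₀ • (1 : A))
    (h3 : Y * Z - Z * Y =
      (3 : ℝ) • X ^ 2 + Z ^ 2 + ξ₁ • (X * Z + Z * X)
        + ξ₄ • X + ξ₂ • Z + ξ₀ • (1 : A))
    (Q : A)
    (hQ : Q = X ^ 3 + ξ₁ • Z ^ 3 + (ξ₁ / 2) • (X ^ 2 * Z + Z * X ^ 2)
      + (2 : ℝ) • (X * Z ^ 2 + Z ^ 2 * X) + (1 / 2 : ℝ) • (Y * Z ^ 2 + Z ^ 2 * Y)
      + (ξ₄ / 2) • X ^ 2 + ((ξ₁ + ξ₃ + ξ₄) / 2) • Z ^ 2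
      + ((ξ₂ + 3) / 2) • (X * Z + Z * X) + (1 / 2 : ℝ) • (Y * Z + Z * Y)
      + (ξ₀ + 1 / 2) • X + (ξ₀ + ξ₄ / 2) • Z) :
    Q * X = X * Q ∧ Q * Y = Y * Q ∧ Q * Z = Z * Q := by
  have hzx : Z * X = X * Z + Z ^ 2 + Z := by
    have := h1; linear_combination (norm := noncomm_ring) this
  have hyx : Y * X = X * Y - (ξ₁ • (X ^ 2 + Z ^ 2) + (X * Z + Z * X) + (Y * Z + Z * Y)
        + ξ₂ • X + ξ₃ • Z + Y + ξ₀ • (1 : A)) := by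
    linear_combination (norm := noncomm_ring) -h2
  have hyz : Y * Z = Z * Y + ((3 : ℝ) • X ^ 2 + Z ^ 2 + ξ₁ • (X * Z + Z * X)
        + ξ₄ • X + ξ₂ • Z + ξ₀ • (1 : A)) := by
    linear_combination (norm := noncomm_ring) h3
  have hzxw : ∀ w : A, Z * (X * w) = X * (Z * w) + Z * (Z * w) + Z * w := by
    intro w
    rw [← mul_assoc, hzx, add_mul, add_mul, mul_assoc, pow_two, mul_assoc]
  have hyxw : ∀ w : A, Y * (X * w) = X * (Y * w) - (ξ₁ • (X ^ 2 + Z ^ 2) + (X * Z + Z * X) + (Y * Z + Z * Y)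
        + ξ₂ • X + ξ₃ • Z + Y + ξ₀ • (1 : A)) * w := by
    intro w
    rw [← mul_assoc, hyx, sub_mul, mul_assoc]
  have hyzw : ∀ w : A, Y * (Z * w) = Z * (Y * w) + ((3 : ℝ) • X ^ 2 + Z ^ 2 + ξ₁ • (X * Z + Z * X)
        + ξ₄ • X + ξ₂ • Z + ξ₀ • (1 : A)) * w := by
    intro w
    rw [← mul_assoc, hyz, add_mul, mul_assoc]
  subst hQ
  refine ⟨?_, ?_, ?_⟩ <;>
  · simp only [pow_succ, pow_zero, one_mul, mul_add, add_mul, sub_mul, mul_sub, smul_add,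
      smul_mul_assoc, mul_smul_comm, smul_smul, mul_assoc, mul_one,
      hzxw, hzx, hyxw, hyx, hyzw, hyz]
    module
end
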